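/- Let N(ρ) = Tr_E(U(ρ⊗ξ)U†) be a channel with full-rank prior γ such that γ' = N(γ) is full rank, and fix spectral decompositions γ = Σ_n r_n |λ_n⟩⟨λ_n|, γ' = Σ_m r'_m |λ'_m⟩⟨λ'_m|, ξ = Σ_k p_k |e_k⟩⟨e_k|, ξ' = Σ_j p'_j |e'_j⟩⟨e'_j|. Define the transition amplitudes Φ_{mj←nk} = (⟨λ'_m|⊗⟨e'_j|) U (|λ_n⟩⊗|e_k⟩). Then the Petz recovery map N̂_γ^P equals the tabletop reverse map N̂^T_{ξ'}(X) = Tr_E(U†(X⊗ξ')U) if and only if for all indices m₁, m₂, n₁, n₂: Σ_{j,k} (p_k √(r_{n₁} r_{n₂}) − p'_j √(r'_{m₁} r'_{m₂})) Φ_{m₁j←n₁k} Φ*_{m₂j←n₂k} = 0. -/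

import Mathlib

open scoped ComplexOrder
open Matrix BigOperators Kronecker

noncomputable def ptraceE {dS dE : ℕ} (M : Matrix (Fin dS × Fin dE) (Fin dS × Fin dE) ℂ) :
    Matrix (Fin dS) (Fin dS) ℂ :=
  Matrix.of fun i j => ∑ k, M (i, k) (j, k)

/-- Transition amplitude `Φ_{mj←nk} = (⟨λ'_m|⊗⟨e'_j|) U (|λ_n⟩⊗|e_k⟩)`. -/
noncomputable def transAmp {dS dE : ℕ}
    (U : Matrix (Fin dS × Fin dE) (Fin dS × Fin dE) ℂ)
    (w : Fin dS → Fin dS → ℂ) (e' : Fin dE → Fin dE → ℂ)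
    (v : Fin dS → Fin dS → ℂ) (e : Fin dE → Fin dE → ℂ)
    (m : Fin dS) (j : Fin dE) (n : Fin dS) (k : Fin dE) : ℂ :=
  ∑ a, ∑ x, ∑ b, ∑ y,
    (starRingEnd ℂ) (w m a) * (starRingEnd ℂ) (e' j x) * U (a, x) (b, y) * v n b * e k y

section TTRaux
open Matrix

variable {dS dE : ℕ}

private lemma sum3_rotate {α β γ M : Type*} [AddCommMonoid M] [Fintype α] [Fintype β] [Fintype γ]
    (f : α → β → γ → M) :
    ∑ x, ∑ y, ∑ z, f x y z = ∑ z, ∑ x, ∑ y, f x y z :=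
  (Finset.sum_congr rfl fun _ _ => Finset.sum_comm).trans Finset.sum_comm

private lemma sum4_rotate {α β γ δ M : Type*} [AddCommMonoid M] [Fintype α] [Fintype β] [Fintype γ]
    [Fintype δ] (f : α → β → γ → δ → M) :
    ∑ x, ∑ y, ∑ z, ∑ t, f x y z t = ∑ t, ∑ x, ∑ y, ∑ z, f x y z t :=
  (Finset.sum_congr rfl fun x _ => sum3_rotate (f x)).trans Finset.sum_comm

private lemma onb_complete {d : ℕ} (u : Fin d → Fin d → ℂ)
    (h : ∀ n l, star (u n) ⬝ᵥ u l = if n = l then (1:ℂ) else 0) (a b : Fin d) :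
    ∑ n, u n a * (starRingEnd ℂ) (u n b) = if a = b then (1:ℂ) else 0 := by
  classical
  set M : Matrix (Fin d) (Fin d) ℂ := Matrix.of u with hMdef
  have hM : M * Mᴴ = 1 := by
    ext n l
    have h2 := h n l
    have key : (M * Mᴴ) n l = (starRingEnd ℂ) (star (u n) ⬝ᵥ u l) := by
      simp only [Matrix.mul_apply, Matrix.conjTranspose_apply, dotProduct, map_sum,
        hMdef, Matrix.of_apply, Pi.star_apply]
      refine Finset.sum_congr rfl fun c _ => ?_
      rw [starRingEnd_apply, star_mul', star_star]
    rw [key, h2]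
    by_cases hnl : n = l <;> simp [Matrix.one_apply, hnl]
  have hM2 : Mᴴ * M = 1 := mul_eq_one_comm.mp hM
  have h3 : (Mᴴ * M) a b = if a = b then 1 else 0 := by
    rw [hM2]; by_cases hab : a = b <;> simp [Matrix.one_apply, hab]
  have h4 : ∑ n, u n a * (starRingEnd ℂ) (u n b) = (starRingEnd ℂ) ((Mᴴ * M) a b) := by
    simp only [Matrix.mul_apply, Matrix.conjTranspose_apply, map_sum, hMdef, Matrix.of_apply]
    refine Finset.sum_congr rfl fun n _ => ?_
    simp only [starRingEnd_apply]
    rw [star_mul', star_star]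
  rw [h4, h3]
  by_cases hab : a = b <;> simp [hab]

private lemma delta_insert {d : ℕ} (u : Fin d → Fin d → ℂ)
    (h : ∀ a b, ∑ n, u n a * (starRingEnd ℂ) (u n b) = if a = b then (1:ℂ) else 0)
    (F G : Fin d → ℂ) :
    ∑ y, F y * G y = ∑ s, (∑ y, F y * (starRingEnd ℂ) (u s y)) * (∑ y, G y * u s y) := by
  symm
  have step1 : ∀ s, (∑ y, F y * (starRingEnd ℂ) (u s y)) * (∑ y, G y * u s y)
      = ∑ y, ∑ y', (F y * (starRingEnd ℂ) (u s y)) * (G y' * u s y') := fun s =>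
    Finset.sum_mul_sum _ _ _ _
  calc ∑ s, (∑ y, F y * (starRingEnd ℂ) (u s y)) * (∑ y, G y * u s y)
      = ∑ s, ∑ y, ∑ y', (F y * (starRingEnd ℂ) (u s y)) * (G y' * u s y') := by
        exact Finset.sum_congr rfl fun s _ => step1 s
    _ = ∑ y, ∑ y', ∑ s, (F y * (starRingEnd ℂ) (u s y)) * (G y' * u s y') := by
        rw [Finset.sum_comm]
        exact Finset.sum_congr rfl fun y _ => Finset.sum_comm
    _ = ∑ y, ∑ y', (F y * G y') * ∑ s, u s y' * (starRingEnd ℂ) (u s y) := by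
        refine Finset.sum_congr rfl fun y _ => Finset.sum_congr rfl fun y' _ => ?_
        rw [Finset.mul_sum]
        exact Finset.sum_congr rfl fun s _ => by ring
    _ = ∑ y, F y * G y := by
        refine Finset.sum_congr rfl fun y _ => ?_
        rw [Finset.sum_eq_single y]
        · rw [h]; simp
        · intro y' _ hy'; rw [h]; simp [hy']
        · simp

private lemma mul_vmv {m n k : Type*} [Fintype n] (M : Matrix m n ℂ) (g : n → ℂ) (h : k → ℂ) :
    M * Matrix.vecMulVec g h = Matrix.vecMulVec (M *ᵥ g) h := by
  ext i j
  simp only [Matrix.mul_apply, Matrix.vecMulVec_apply, Matrix.mulVec, dotProduct,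
    Finset.sum_mul]
  exact Finset.sum_congr rfl fun c _ => by ring

private lemma vmv_mul {m n k : Type*} [Fintype n] (M : Matrix n k ℂ) (g : m → ℂ) (h : n → ℂ) :
    Matrix.vecMulVec g h * M = Matrix.vecMulVec g (h ᵥ* M) := by
  ext i j
  simp only [Matrix.mul_apply, Matrix.vecMulVec_apply, Matrix.vecMul, dotProduct,
    Finset.mul_sum]
  exact Finset.sum_congr rfl fun c _ => by ring

private lemma vmv_mul_vmv {m n k : Type*} [Fintype n] (a : m → ℂ) (b c : n → ℂ) (d : k → ℂ) :
    Matrix.vecMulVec a b * Matrix.vecMulVec c d = (b ⬝ᵥ c) • Matrix.vecMulVec a d := by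
  ext i j
  simp only [Matrix.mul_apply, Matrix.vecMulVec_apply, Matrix.smul_apply, smul_eq_mul,
    dotProduct, Finset.sum_mul]
  exact Finset.sum_congr rfl fun t _ => by ring

private lemma vmv_mulVec {m n : Type*} [Fintype n] (a : m → ℂ) (b x : n → ℂ) :
    Matrix.vecMulVec a b *ᵥ x = (b ⬝ᵥ x) • a := by
  ext i
  simp only [Matrix.mulVec, dotProduct, Matrix.vecMulVec_apply, Pi.smul_apply, smul_eq_mul,
    Finset.sum_mul]
  exact Finset.sum_congr rfl fun t _ => by ring

private lemma kron_vmv (a b : Fin dS → ℂ) (c d : Fin dE → ℂ) :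
    (Matrix.vecMulVec a b) ⊗ₖ (Matrix.vecMulVec c d)
      = Matrix.vecMulVec (fun p : Fin dS × Fin dE => a p.1 * c p.2)
          (fun p : Fin dS × Fin dE => b p.1 * d p.2) := by
  ext ⟨i, x⟩ ⟨j, y⟩
  simp [Matrix.kroneckerMap_apply, Matrix.vecMulVec_apply]
  ring

private lemma ptraceE_sum {ι : Type*} (t : Finset ι)
    (M : ι → Matrix (Fin dS × Fin dE) (Fin dS × Fin dE) ℂ) :
    ptraceE (∑ i ∈ t, M i) = ∑ i ∈ t, ptraceE (M i) := by
  ext a b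
  simp only [ptraceE, Matrix.of_apply, Finset.sum_apply, Matrix.sum_apply]
  exact Finset.sum_comm

private lemma ptraceE_smul (c : ℂ) (M : Matrix (Fin dS × Fin dE) (Fin dS × Fin dE) ℂ) :
    ptraceE (c • M) = c • ptraceE M := by
  ext a b
  simp [ptraceE, Finset.mul_sum]

private lemma dot_ptrace_vmv (G H : Fin dS × Fin dE → ℂ) (c1 c2 : Fin dS → ℂ) :
    star c1 ⬝ᵥ (ptraceE (Matrix.vecMulVec G H)) *ᵥ c2
      = ∑ y, (∑ b, (starRingEnd ℂ) (c1 b) * G (b, y)) * (∑ b', H (b', y) * c2 b') := by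
  calc star c1 ⬝ᵥ (ptraceE (Matrix.vecMulVec G H)) *ᵥ c2
      = ∑ b, ∑ b', ∑ y, (starRingEnd ℂ) (c1 b) * (G (b, y) * H (b', y)) * c2 b' := by
        simp only [dotProduct, Matrix.mulVec, ptraceE, Matrix.of_apply, Pi.star_apply,
          Matrix.vecMulVec_apply, Finset.sum_mul, Finset.mul_sum, starRingEnd_apply]
        exact Finset.sum_congr rfl fun b _ => Finset.sum_congr rfl fun b' _ =>
          Finset.sum_congr rfl fun y _ => by ring
    _ = ∑ y, ∑ b, ∑ b', (starRingEnd ℂ) (c1 b) * (G (b, y) * H (b', y)) * c2 b' :=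
        sum3_rotate _
    _ = ∑ y, (∑ b, (starRingEnd ℂ) (c1 b) * G (b, y)) * (∑ b', H (b', y) * c2 b') := by
        refine Finset.sum_congr rfl fun y _ => ?_
        rw [Finset.sum_mul_sum]
        exact Finset.sum_congr rfl fun b _ => Finset.sum_congr rfl fun b' _ => by ring

private noncomputable def amp (A : Matrix (Fin dS × Fin dE) (Fin dS × Fin dE) ℂ)
    (d : Fin dS → ℂ) (u : Fin dE → ℂ) (c : Fin dS → ℂ) (f : Fin dE → ℂ) : ℂ :=
  ∑ a, ∑ x, ∑ b, ∑ y,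
    (starRingEnd ℂ) (d a) * (starRingEnd ℂ) (u x) * A (a, x) (b, y) * c b * f y

private lemma F_eq (A : Matrix (Fin dS × Fin dE) (Fin dS × Fin dE) ℂ)
    (d1 : Fin dS → ℂ) (u : Fin dE → ℂ) (c1 : Fin dS → ℂ) (f : Fin dE → ℂ) :
    ∑ y, (∑ b, (starRingEnd ℂ) (c1 b) * (Aᴴ *ᵥ fun p : Fin dS × Fin dE => d1 p.1 * u p.2) (b, y))
        * (starRingEnd ℂ) (f y)
      = (starRingEnd ℂ) (amp A d1 u c1 f) := by
  calc ∑ y, (∑ b, (starRingEnd ℂ) (c1 b) *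
          (Aᴴ *ᵥ fun p : Fin dS × Fin dE => d1 p.1 * u p.2) (b, y)) * (starRingEnd ℂ) (f y)
      = ∑ y, ∑ b, ∑ a, ∑ x, d1 a * u x * (starRingEnd ℂ) (A (a, x) (b, y)) *
          (starRingEnd ℂ) (c1 b) * (starRingEnd ℂ) (f y) := by
        refine Finset.sum_congr rfl fun y _ => ?_
        rw [Finset.sum_mul]
        refine Finset.sum_congr rfl fun b _ => ?_
        simp only [Matrix.mulVec, dotProduct, Matrix.conjTranspose_apply, Fintype.sum_prod_type,
          Finset.sum_mul, Finset.mul_sum, starRingEnd_apply]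
        exact Finset.sum_congr rfl fun a _ => Finset.sum_congr rfl fun x _ => by ring
    _ = ∑ x, ∑ y, ∑ b, ∑ a, d1 a * u x * (starRingEnd ℂ) (A (a, x) (b, y)) *
          (starRingEnd ℂ) (c1 b) * (starRingEnd ℂ) (f y) := sum4_rotate _
    _ = ∑ a, ∑ x, ∑ y, ∑ b, d1 a * u x * (starRingEnd ℂ) (A (a, x) (b, y)) *
          (starRingEnd ℂ) (c1 b) * (starRingEnd ℂ) (f y) := sum4_rotate _
    _ = ∑ a, ∑ x, ∑ b, ∑ y, d1 a * u x * (starRingEnd ℂ) (A (a, x) (b, y)) *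
          (starRingEnd ℂ) (c1 b) * (starRingEnd ℂ) (f y) :=
        Finset.sum_congr rfl fun a _ => Finset.sum_congr rfl fun x _ => Finset.sum_comm
    _ = (starRingEnd ℂ) (amp A d1 u c1 f) := by
        simp only [amp, map_sum, _root_.map_mul, starRingEnd_apply, star_star]

private lemma G_eq (A : Matrix (Fin dS × Fin dE) (Fin dS × Fin dE) ℂ)
    (d2 : Fin dS → ℂ) (u : Fin dE → ℂ) (c2 : Fin dS → ℂ) (f : Fin dE → ℂ) :
    ∑ y, (∑ b', ((fun p : Fin dS × Fin dE => star (d2 p.1) * star (u p.2)) ᵥ* A) (b', y) * c2 b')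
        * f y
      = amp A d2 u c2 f := by
  calc ∑ y, (∑ b', ((fun p : Fin dS × Fin dE => star (d2 p.1) * star (u p.2)) ᵥ* A) (b', y)
          * c2 b') * f y
      = ∑ y, ∑ b, ∑ a, ∑ x, (starRingEnd ℂ) (d2 a) * (starRingEnd ℂ) (u x) * A (a, x) (b, y) *
          c2 b * f y := by
        refine Finset.sum_congr rfl fun y _ => ?_
        rw [Finset.sum_mul]
        refine Finset.sum_congr rfl fun b _ => ?_
        simp only [Matrix.vecMul, dotProduct, Fintype.sum_prod_type, Finset.sum_mul,
          Finset.mul_sum, starRingEnd_apply]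
    _ = ∑ x, ∑ y, ∑ b, ∑ a, (starRingEnd ℂ) (d2 a) * (starRingEnd ℂ) (u x) * A (a, x) (b, y) *
          c2 b * f y := sum4_rotate _
    _ = ∑ a, ∑ x, ∑ y, ∑ b, (starRingEnd ℂ) (d2 a) * (starRingEnd ℂ) (u x) * A (a, x) (b, y) *
          c2 b * f y := sum4_rotate _
    _ = amp A d2 u c2 f :=
        Finset.sum_congr rfl fun a _ => Finset.sum_congr rfl fun x _ => Finset.sum_comm

private lemma amp_conjTranspose (A : Matrix (Fin dS × Fin dE) (Fin dS × Fin dE) ℂ)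
    (d : Fin dS → ℂ) (u : Fin dE → ℂ) (c : Fin dS → ℂ) (f : Fin dE → ℂ) :
    amp Aᴴ d u c f = (starRingEnd ℂ) (amp A c f d u) := by
  calc amp Aᴴ d u c f
      = ∑ a, ∑ x, ∑ b, ∑ y, (starRingEnd ℂ) (d a) * (starRingEnd ℂ) (u x) *
          (starRingEnd ℂ) (A (b, y) (a, x)) * c b * f y := by
        simp only [amp, Matrix.conjTranspose_apply, starRingEnd_apply]
    _ = ∑ y, ∑ a, ∑ x, ∑ b, (starRingEnd ℂ) (d a) * (starRingEnd ℂ) (u x) *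
          (starRingEnd ℂ) (A (b, y) (a, x)) * c b * f y := sum4_rotate _
    _ = ∑ b, ∑ y, ∑ a, ∑ x, (starRingEnd ℂ) (d a) * (starRingEnd ℂ) (u x) *
          (starRingEnd ℂ) (A (b, y) (a, x)) * c b * f y := sum4_rotate _
    _ = (starRingEnd ℂ) (amp A c f d u) := by
        simp only [amp, map_sum, _root_.map_mul, starRingEnd_apply, star_star]
        exact Finset.sum_congr rfl fun b _ => Finset.sum_congr rfl fun y _ =>
          Finset.sum_congr rfl fun a _ => Finset.sum_congr rfl fun x _ => by ring

private lemma dot_sum_smul_mulVec {m n ι : Type*} [Fintype m] [Fintype n] [Fintype ι]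
    (x : m → ℂ) (y : n → ℂ) (c : ι → ℂ) (M : ι → Matrix m n ℂ) :
    x ⬝ᵥ (∑ i, c i • M i) *ᵥ y = ∑ i, c i * (x ⬝ᵥ (M i) *ᵥ y) := by
  calc x ⬝ᵥ (∑ i, c i • M i) *ᵥ y
      = ∑ b, ∑ b', ∑ i, x b * (c i * M i b b') * y b' := by
        simp only [dotProduct, Matrix.mulVec, Matrix.sum_apply, Matrix.smul_apply,
          smul_eq_mul, Finset.mul_sum, Finset.sum_mul]
        exact Finset.sum_congr rfl fun b _ => Finset.sum_congr rfl fun b' _ =>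
          Finset.sum_congr rfl fun i _ => by ring
    _ = ∑ i, ∑ b, ∑ b', x b * (c i * M i b b') * y b' := sum3_rotate _
    _ = ∑ i, c i * (x ⬝ᵥ (M i) *ᵥ y) := by
        refine Finset.sum_congr rfl fun i _ => ?_
        simp only [dotProduct, Matrix.mulVec, Finset.mul_sum, Finset.sum_mul]
        exact Finset.sum_congr rfl fun b _ => Finset.sum_congr rfl fun b' _ => by ring

private lemma elemL (A : Matrix (Fin dS × Fin dE) (Fin dS × Fin dE) ℂ)
    (q : Fin dE → ℝ) (u f : Fin dE → Fin dE → ℂ)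
    (hf : ∀ a b, ∑ n, f n a * (starRingEnd ℂ) (f n b) = if a = b then (1:ℂ) else 0)
    (c1 c2 d1 d2 : Fin dS → ℂ) :
    star c1 ⬝ᵥ (ptraceE (Aᴴ * ((Matrix.vecMulVec d1 (star d2)) ⊗ₖ
        (∑ t, (q t : ℂ) • Matrix.vecMulVec (u t) (star (u t)))) * A)) *ᵥ c2
    = ∑ t, ∑ s, (q t : ℂ) * (starRingEnd ℂ) (amp A d1 (u t) c1 (f s)) *
        amp A d2 (u t) c2 (f s) := by
  have hkron : (Matrix.vecMulVec d1 (star d2)) ⊗ₖ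
      (∑ t, (q t : ℂ) • Matrix.vecMulVec (u t) (star (u t)))
      = ∑ t, (q t : ℂ) • Matrix.vecMulVec
          (fun p : Fin dS × Fin dE => d1 p.1 * u t p.2)
          (fun p : Fin dS × Fin dE => star (d2 p.1) * star (u t p.2)) := by
    ext ⟨i, x⟩ ⟨j, y⟩
    simp only [Matrix.kroneckerMap_apply, Matrix.vecMulVec_apply, Matrix.sum_apply,
      Matrix.smul_apply, smul_eq_mul, Pi.star_apply, Finset.mul_sum]
    exact Finset.sum_congr rfl fun t _ => by ring
  have hmat : Aᴴ * ((Matrix.vecMulVec d1 (star d2)) ⊗ₖ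
      (∑ t, (q t : ℂ) • Matrix.vecMulVec (u t) (star (u t)))) * A
      = ∑ t, (q t : ℂ) • Matrix.vecMulVec
          (Aᴴ *ᵥ fun p : Fin dS × Fin dE => d1 p.1 * u t p.2)
          ((fun p : Fin dS × Fin dE => star (d2 p.1) * star (u t p.2)) ᵥ* A) := by
    rw [hkron, Matrix.mul_sum, Matrix.sum_mul]
    refine Finset.sum_congr rfl fun t _ => ?_
    rw [Matrix.mul_smul, Matrix.smul_mul, mul_vmv, vmv_mul]
  rw [hmat, ptraceE_sum]
  have : ∀ t, ptraceE ((q t : ℂ) • Matrix.vecMulVec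
          (Aᴴ *ᵥ fun p : Fin dS × Fin dE => d1 p.1 * u t p.2)
          ((fun p : Fin dS × Fin dE => star (d2 p.1) * star (u t p.2)) ᵥ* A))
      = (q t : ℂ) • ptraceE (Matrix.vecMulVec
          (Aᴴ *ᵥ fun p : Fin dS × Fin dE => d1 p.1 * u t p.2)
          ((fun p : Fin dS × Fin dE => star (d2 p.1) * star (u t p.2)) ᵥ* A)) :=
    fun t => ptraceE_smul _ _
  simp only [this]
  rw [dot_sum_smul_mulVec]
  refine Finset.sum_congr rfl fun t _ => ?_
  rw [dot_ptrace_vmv, delta_insert f hf, Finset.mul_sum]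
  refine Finset.sum_congr rfl fun s _ => ?_
  rw [F_eq, G_eq]
  ring

private lemma vmv_conjTranspose {m n : Type*} (a : m → ℂ) (b : n → ℂ) :
    (Matrix.vecMulVec a b)ᴴ = Matrix.vecMulVec (star b) (star a) := by
  ext i j
  simp [Matrix.conjTranspose_apply, Matrix.vecMulVec_apply, mul_comm]

private lemma trace_vmv_mul {m n : Type*} [Fintype m] [Fintype n]
    (c : m → ℂ) (d : n → ℂ) (M : Matrix n m ℂ) :
    (Matrix.vecMulVec c d * M).trace = d ⬝ᵥ (M *ᵥ c) := by
  simp only [Matrix.trace, Matrix.diag, Matrix.mul_apply, Matrix.vecMulVec_apply,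
    dotProduct, Matrix.mulVec, Finset.mul_sum]
  rw [Finset.sum_comm]
  exact Finset.sum_congr rfl fun b _ => Finset.sum_congr rfl fun a _ => by ring

private lemma trace_conjTranspose_mul_vmv {m n : Type*} [Fintype m] [Fintype n]
    (A : Matrix m n ℂ) (c : m → ℂ) (d : n → ℂ) :
    (Aᴴ * Matrix.vecMulVec c (star d)).trace = (starRingEnd ℂ) (star c ⬝ᵥ A *ᵥ d) := by
  simp only [Matrix.trace, Matrix.diag, Matrix.mul_apply, Matrix.vecMulVec_apply,
    Matrix.conjTranspose_apply, dotProduct, Matrix.mulVec, map_sum, _root_.map_mul,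
    Finset.mul_sum, Pi.star_apply, starRingEnd_apply, star_star]
  rw [Finset.sum_comm]
  exact Finset.sum_congr rfl fun a _ => Finset.sum_congr rfl fun b _ => by ring

private lemma trace_conjTranspose_mul_stdBasis {m n : Type*} [Fintype m] [Fintype n]
    [DecidableEq m] [DecidableEq n] (A : Matrix m n ℂ) (a : m) (b : n) :
    (Aᴴ * Matrix.single a b (1 : ℂ)).trace = (starRingEnd ℂ) (A a b) := by
  simp only [Matrix.trace, Matrix.diag, Matrix.mul_apply, Matrix.conjTranspose_apply,
    Matrix.single, Matrix.of_apply, mul_ite, mul_one, mul_zero, starRingEnd_apply]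
  simp [ite_and]

private lemma sum_outer_eq_one {d : ℕ} (u : Fin d → Fin d → ℂ)
    (h : ∀ n l, star (u n) ⬝ᵥ u l = if n = l then (1:ℂ) else 0) :
    ∑ n, Matrix.vecMulVec (u n) (star (u n)) = 1 := by
  ext a b
  have := onb_complete u h a b
  simp only [Matrix.sum_apply, Matrix.vecMulVec_apply, Pi.star_apply, Matrix.one_apply,
    starRingEnd_apply] at this ⊢
  exact this

private lemma psd_sum_outer (c : Fin dS → ℝ) (hc : ∀ n, 0 ≤ c n) (v : Fin dS → Fin dS → ℂ) :
    Matrix.PosSemidef (∑ n, (c n : ℂ) • Matrix.vecMulVec (v n) (star (v n))) := by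
  refine Matrix.PosSemidef.of_dotProduct_mulVec_nonneg ?_ ?_
  · show Matrix.IsHermitian _
    unfold Matrix.IsHermitian
    rw [Matrix.conjTranspose_sum]
    refine Finset.sum_congr rfl fun n _ => ?_
    rw [Matrix.conjTranspose_smul, vmv_conjTranspose, star_star]
    simp [Complex.conj_ofReal]
  · intro x
    rw [dot_sum_smul_mulVec]
    refine Finset.sum_nonneg fun n _ => ?_
    have h1 : star x ⬝ᵥ (Matrix.vecMulVec (v n) (star (v n))) *ᵥ x
        = (star (v n) ⬝ᵥ x) * (starRingEnd ℂ) (star (v n) ⬝ᵥ x) := by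
      rw [vmv_mulVec, dotProduct_smul, smul_eq_mul]
      congr 1
      simp only [dotProduct, map_sum, _root_.map_mul, Pi.star_apply, starRingEnd_apply,
        star_star]
      exact Finset.sum_congr rfl fun a _ => by ring
    rw [h1, Complex.mul_conj]
    rw [← Complex.ofReal_mul]
    rw [Complex.zero_le_real]
    exact mul_nonneg (hc n) (Complex.normSq_nonneg _)

private lemma matrix_decomp {d : ℕ} (u : Fin d → Fin d → ℂ)
    (h : ∀ n l, star (u n) ⬝ᵥ u l = if n = l then (1:ℂ) else 0)
    (X : Matrix (Fin d) (Fin d) ℂ) :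
    X = ∑ m1, ∑ m2, (star (u m1) ⬝ᵥ X *ᵥ u m2) • Matrix.vecMulVec (u m1) (star (u m2)) := by
  have h1 : (∑ m, Matrix.vecMulVec (u m) (star (u m))) = 1 := sum_outer_eq_one u h
  calc X = (∑ m1, Matrix.vecMulVec (u m1) (star (u m1))) * X *
        (∑ m2, Matrix.vecMulVec (u m2) (star (u m2))) := by rw [h1, Matrix.one_mul, Matrix.mul_one]
    _ = ∑ m1, ∑ m2, (Matrix.vecMulVec (u m1) (star (u m1)) * X) *
        Matrix.vecMulVec (u m2) (star (u m2)) := by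
        rw [Matrix.sum_mul, Matrix.sum_mul]
        exact Finset.sum_congr rfl fun m1 _ => Matrix.mul_sum _ _ _
    _ = ∑ m1, ∑ m2, (star (u m1) ⬝ᵥ X *ᵥ u m2) • Matrix.vecMulVec (u m1) (star (u m2)) := by
        refine Finset.sum_congr rfl fun m1 _ => Finset.sum_congr rfl fun m2 _ => ?_
        rw [vmv_mul, vmv_mul_vmv, Matrix.dotProduct_mulVec]

private lemma sum_smul_mulVec {ι m n : Type*} [Fintype ι] [Fintype n]
    (c : ι → ℂ) (M : ι → Matrix m n ℂ) (y : n → ℂ) :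
    (∑ i, c i • M i) *ᵥ y = ∑ i, c i • (M i *ᵥ y) := by
  ext b
  simp only [Matrix.mulVec, dotProduct, Matrix.sum_apply, Matrix.smul_apply,
    Finset.sum_apply, Pi.smul_apply, smul_eq_mul, Finset.sum_mul, Finset.mul_sum]
  rw [Finset.sum_comm]
  exact Finset.sum_congr rfl fun i _ => Finset.sum_congr rfl fun t _ => by ring

private lemma outer_mul_outer {d : ℕ} (u : Fin d → Fin d → ℂ)
    (h : ∀ n l, star (u n) ⬝ᵥ u l = if n = l then (1:ℂ) else 0) (n l : Fin d) :
    Matrix.vecMulVec (u n) (star (u n)) * Matrix.vecMulVec (u l) (star (u l))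
      = if n = l then Matrix.vecMulVec (u n) (star (u l)) else 0 := by
  rw [vmv_mul_vmv, h n l]
  split <;> simp

private lemma sq_sum_outer {d : ℕ} (c : Fin d → ℂ) (u : Fin d → Fin d → ℂ)
    (h : ∀ n l, star (u n) ⬝ᵥ u l = if n = l then (1:ℂ) else 0) :
    (∑ n, c n • Matrix.vecMulVec (u n) (star (u n))) *
      (∑ n, c n • Matrix.vecMulVec (u n) (star (u n)))
    = ∑ n, (c n * c n) • Matrix.vecMulVec (u n) (star (u n)) := by
  rw [Matrix.sum_mul]
  refine Finset.sum_congr rfl fun n _ => ?_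
  rw [Matrix.mul_sum]
  rw [Finset.sum_eq_single n]
  · rw [Matrix.smul_mul, Matrix.mul_smul, outer_mul_outer u h, if_pos rfl, smul_smul]
  · intro l _ hl
    rw [Matrix.smul_mul, Matrix.mul_smul, outer_mul_outer u h, if_neg (Ne.symm hl)]
    simp
  · simp

private lemma sqrt_decomp {d : ℕ} (rr : Fin d → ℝ) (hrr : ∀ n, 0 ≤ rr n)
    (v : Fin d → Fin d → ℂ)
    (hv : ∀ n l, star (v n) ⬝ᵥ v l = if n = l then (1:ℂ) else 0)
    (S : Matrix (Fin d) (Fin d) ℂ) (hS : S.PosSemidef)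
    (hSsq : S * S = ∑ n, (rr n : ℂ) • Matrix.vecMulVec (v n) (star (v n))) :
    S = ∑ n, ((Real.sqrt (rr n) : ℝ) : ℂ) • Matrix.vecMulVec (v n) (star (v n)) := by
  have hS0 : Matrix.PosSemidef (∑ n, ((Real.sqrt (rr n) : ℝ) : ℂ) •
      Matrix.vecMulVec (v n) (star (v n))) :=
    psd_sum_outer _ (fun n => Real.sqrt_nonneg _) v
  open scoped MatrixOrder in refine (CFC.sq_eq_sq_iff S _ hS.nonneg hS0.nonneg).mp ?_
  rw [pow_two, pow_two, hSsq, sq_sum_outer _ _ hv]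
  refine Finset.sum_congr rfl fun n _ => ?_
  rw [← Complex.ofReal_mul, Real.mul_self_sqrt (hrr n)]

private lemma inv_decomp {d : ℕ} (c : Fin d → ℂ) (hc : ∀ n, c n ≠ 0)
    (v : Fin d → Fin d → ℂ)
    (hv : ∀ n l, star (v n) ⬝ᵥ v l = if n = l then (1:ℂ) else 0) :
    (∑ n, c n • Matrix.vecMulVec (v n) (star (v n)))⁻¹
      = ∑ n, (c n)⁻¹ • Matrix.vecMulVec (v n) (star (v n)) := by
  apply Matrix.inv_eq_right_inv
  rw [Matrix.sum_mul]
  rw [← sum_outer_eq_one v hv]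
  refine Finset.sum_congr rfl fun n _ => ?_
  rw [Matrix.mul_sum, Finset.sum_eq_single n]
  · rw [Matrix.smul_mul, Matrix.mul_smul, outer_mul_outer v hv, if_pos rfl, smul_smul,
      mul_inv_cancel₀ (hc n), one_smul]
  · intro l _ hl
    rw [Matrix.smul_mul, Matrix.mul_smul, outer_mul_outer v hv, if_neg (Ne.symm hl)]
    simp
  · simp

private lemma dot_sum_outer_mulVec {d : ℕ} (c : Fin d → ℂ) (v : Fin d → Fin d → ℂ)
    (hv : ∀ n l, star (v n) ⬝ᵥ v l = if n = l then (1:ℂ) else 0) (n1 : Fin d) (z : Fin d → ℂ) :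
    star (v n1) ⬝ᵥ (∑ n, c n • Matrix.vecMulVec (v n) (star (v n))) *ᵥ z
      = c n1 * (star (v n1) ⬝ᵥ z) := by
  rw [dot_sum_smul_mulVec, Finset.sum_eq_single n1]
  · rw [vmv_mulVec, dotProduct_smul, smul_eq_mul, hv n1 n1, if_pos rfl]
    ring
  · intro l _ hl
    rw [vmv_mulVec, dotProduct_smul, smul_eq_mul, hv n1 l, if_neg (Ne.symm hl)]
    ring
  · simp

private lemma sum_outer_mulVec_eig {d : ℕ} (c : Fin d → ℂ) (v : Fin d → Fin d → ℂ)
    (hv : ∀ n l, star (v n) ⬝ᵥ v l = if n = l then (1:ℂ) else 0) (n2 : Fin d) :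
    (∑ n, c n • Matrix.vecMulVec (v n) (star (v n))) *ᵥ v n2 = c n2 • v n2 := by
  rw [sum_smul_mulVec, Finset.sum_eq_single n2]
  · rw [vmv_mulVec, hv n2 n2, if_pos rfl, one_smul]
  · intro l _ hl
    rw [vmv_mulVec, hv l n2, if_neg hl]
    simp
  · simp

private lemma s0_sandwich {d : ℕ} (c : Fin d → ℂ) (v : Fin d → Fin d → ℂ)
    (hv : ∀ n l, star (v n) ⬝ᵥ v l = if n = l then (1:ℂ) else 0)
    (A : Matrix (Fin d) (Fin d) ℂ) (n1 n2 : Fin d) :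
    star (v n1) ⬝ᵥ ((∑ n, c n • Matrix.vecMulVec (v n) (star (v n))) * A *
        (∑ n, c n • Matrix.vecMulVec (v n) (star (v n)))) *ᵥ v n2
      = c n1 * c n2 * (star (v n1) ⬝ᵥ A *ᵥ v n2) := by
  rw [← Matrix.mulVec_mulVec, ← Matrix.mulVec_mulVec, sum_outer_mulVec_eig c v hv,
    Matrix.mulVec_smul, Matrix.mulVec_smul, dotProduct_smul, smul_eq_mul,
    dot_sum_outer_mulVec c v hv]
  ring

private lemma outer_sandwich {d : ℕ} (c : Fin d → ℂ) (v : Fin d → Fin d → ℂ)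
    (hv : ∀ n l, star (v n) ⬝ᵥ v l = if n = l then (1:ℂ) else 0) (m1 m2 : Fin d) :
    (∑ n, c n • Matrix.vecMulVec (v n) (star (v n))) * Matrix.vecMulVec (v m1) (star (v m2)) *
        (∑ n, c n • Matrix.vecMulVec (v n) (star (v n)))
      = (c m1 * c m2) • Matrix.vecMulVec (v m1) (star (v m2)) := by
  have h1 : (∑ n, c n • Matrix.vecMulVec (v n) (star (v n))) *
      Matrix.vecMulVec (v m1) (star (v m2)) = c m1 • Matrix.vecMulVec (v m1) (star (v m2)) := by
    rw [Matrix.sum_mul, Finset.sum_eq_single m1]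
    · rw [Matrix.smul_mul, vmv_mul_vmv, hv m1 m1, if_pos rfl, one_smul]
    · intro l _ hl
      rw [Matrix.smul_mul, vmv_mul_vmv, hv l m1, if_neg hl]
      simp
    · simp
  have h2 : Matrix.vecMulVec (v m1) (star (v m2)) *
      (∑ n, c n • Matrix.vecMulVec (v n) (star (v n)))
      = c m2 • Matrix.vecMulVec (v m1) (star (v m2)) := by
    rw [Matrix.mul_sum, Finset.sum_eq_single m2]
    · rw [Matrix.mul_smul, vmv_mul_vmv, hv m2 m2, if_pos rfl, one_smul]
    · intro l _ hl
      rw [Matrix.mul_smul, vmv_mul_vmv, hv m2 l, if_neg (Ne.symm hl)]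
      simp
    · simp
  rw [h1, Matrix.smul_mul, h2, smul_smul]

private lemma ptraceE_add (M N : Matrix (Fin dS × Fin dE) (Fin dS × Fin dE) ℂ) :
    ptraceE (M + N) = ptraceE M + ptraceE N := by
  ext a b
  simp [ptraceE, Finset.sum_add_distrib]

end TTRaux

/-- Exact tabletop-reversibility criterion: the Petz recovery map of the channel
`N(ρ) = Tr_E(U(ρ⊗ξ)U†)` with prior `γ` equals the tabletop reverse map
`X ↦ Tr_E(U†(X⊗ξ')U)` iff for all `m₁ m₂ n₁ n₂`,
`Σ_{j,k} (p_k √(r_{n₁} r_{n₂}) − p'_j √(r'_{m₁} r'_{m₂})) Φ_{m₁j←n₁k} Φ*_{m₂j←n₂k} = 0`. -/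
theorem exact_TTR_iff {dS dE : ℕ}
    (U : Matrix (Fin dS × Fin dE) (Fin dS × Fin dE) ℂ)
    (hU : U ∈ Matrix.unitaryGroup (Fin dS × Fin dE) ℂ)
    (ξ ξ' : Matrix (Fin dE) (Fin dE) ℂ)
    (hξ : ξ.PosSemidef) (hξtr : ξ.trace = 1)
    (hξ' : ξ'.PosSemidef) (hξ'tr : ξ'.trace = 1)
    (γ : Matrix (Fin dS) (Fin dS) ℂ) (hγ : γ.PosDef) (hγtr : γ.trace = 1)
    (γ' : Matrix (Fin dS) (Fin dS) ℂ)
    (hγ'def : γ' = ptraceE (U * (γ ⊗ₖ ξ) * Uᴴ)) (hγ' : γ'.PosDef)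
    -- spectral decompositions
    (rγ : Fin dS → ℝ) (v : Fin dS → Fin dS → ℂ)
    (hrγ : ∀ n, 0 < rγ n)
    (hv : ∀ n l, star (v n) ⬝ᵥ v l = if n = l then (1 : ℂ) else 0)
    (hγdec : γ = ∑ n, (rγ n : ℂ) • Matrix.vecMulVec (v n) (star (v n)))
    (rγ' : Fin dS → ℝ) (w : Fin dS → Fin dS → ℂ)
    (hrγ' : ∀ m, 0 < rγ' m)
    (hw : ∀ m l, star (w m) ⬝ᵥ w l = if m = l then (1 : ℂ) else 0)
    (hγ'dec : γ' = ∑ m, (rγ' m : ℂ) • Matrix.vecMulVec (w m) (star (w m)))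
    (p : Fin dE → ℝ) (e : Fin dE → Fin dE → ℂ)
    (hp : ∀ k, 0 ≤ p k)
    (he : ∀ k l, star (e k) ⬝ᵥ e l = if k = l then (1 : ℂ) else 0)
    (hξdec : ξ = ∑ k, (p k : ℂ) • Matrix.vecMulVec (e k) (star (e k)))
    (p' : Fin dE → ℝ) (e' : Fin dE → Fin dE → ℂ)
    (hp' : ∀ j, 0 ≤ p' j)
    (he' : ∀ j l, star (e' j) ⬝ᵥ e' l = if j = l then (1 : ℂ) else 0)
    (hξ'dec : ξ' = ∑ j, (p' j : ℂ) • Matrix.vecMulVec (e' j) (star (e' j)))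
    -- Hilbert–Schmidt adjoint of the forward channel
    (Nadj : Matrix (Fin dS) (Fin dS) ℂ → Matrix (Fin dS) (Fin dS) ℂ)
    (hadj : ∀ X Y, (Xᴴ * ptraceE (U * (Y ⊗ₖ ξ) * Uᴴ)).trace = ((Nadj X)ᴴ * Y).trace)
    -- positive square roots of γ and γ'
    (s r : Matrix (Fin dS) (Fin dS) ℂ)
    (hs : s.PosDef) (hssq : s * s = γ)
    (hr : r.PosDef) (hrsq : r * r = γ') :
    (∀ X : Matrix (Fin dS) (Fin dS) ℂ,
        s * Nadj (r⁻¹ * X * r⁻¹) * s = ptraceE (Uᴴ * (X ⊗ₖ ξ') * U)) ↔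
    (∀ m₁ m₂ n₁ n₂ : Fin dS,
        ∑ j, ∑ k,
          ((p k * Real.sqrt (rγ n₁ * rγ n₂) - p' j * Real.sqrt (rγ' m₁ * rγ' m₂) : ℝ) : ℂ) *
            transAmp U w e' v e m₁ j n₁ k *
            (starRingEnd ℂ) (transAmp U w e' v e m₂ j n₂ k) = 0) := by
  classical
  have heC := onb_complete e he
  have he'C := onb_complete e' he'
  -- amp is definitionally transAmp
  have hampU : ∀ m j n k, amp U (w m) (e' j) (v n) (e k) = transAmp U w e' v e m j n k :=
    fun _ _ _ _ => rfl
  -- identification of the square roots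
  have hsdec : s = ∑ n, ((Real.sqrt (rγ n) : ℝ) : ℂ) • Matrix.vecMulVec (v n) (star (v n)) :=
    sqrt_decomp rγ (fun n => (hrγ n).le) v hv s hs.posSemidef (by rw [hssq]; exact hγdec)
  have hrdec : r = ∑ m, ((Real.sqrt (rγ' m) : ℝ) : ℂ) • Matrix.vecMulVec (w m) (star (w m)) :=
    sqrt_decomp rγ' (fun m => (hrγ' m).le) w hw r hr.posSemidef (by rw [hrsq]; exact hγ'dec)
  have hsqrt_ne : ∀ m, ((Real.sqrt (rγ' m) : ℝ) : ℂ) ≠ 0 := fun m =>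
    Complex.ofReal_ne_zero.mpr (ne_of_gt (Real.sqrt_pos.mpr (hrγ' m)))
  have hrinv : r⁻¹ = ∑ m, (((Real.sqrt (rγ' m) : ℝ) : ℂ))⁻¹ •
      Matrix.vecMulVec (w m) (star (w m)) := by
    rw [hrdec]; exact inv_decomp _ hsqrt_ne w hw
  -- explicit formula for Nadj, hence linearity
  have hNadj_eq : ∀ X, Nadj X = Matrix.of fun a b => (starRingEnd ℂ)
      ((Xᴴ * ptraceE (U * ((Matrix.single a b (1:ℂ)) ⊗ₖ ξ) * Uᴴ)).trace) := by
    intro X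
    ext a b
    have h := hadj X (Matrix.single a b (1:ℂ))
    rw [trace_conjTranspose_mul_stdBasis] at h
    have h2 := congrArg (starRingEnd ℂ) h
    rw [Complex.conj_conj] at h2
    simpa using h2.symm
  have hNadj_add : ∀ X Y, Nadj (X + Y) = Nadj X + Nadj Y := by
    intro X Y
    rw [hNadj_eq (X + Y), hNadj_eq X, hNadj_eq Y]
    ext a b
    simp [Matrix.conjTranspose_add, Matrix.add_mul]
  have hNadj_smul : ∀ (cc : ℂ) X, Nadj (cc • X) = cc • Nadj X := by
    intro cc X
    rw [hNadj_eq (cc • X), hNadj_eq X]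
    ext a b
    simp only [Matrix.of_apply, Matrix.smul_apply, Matrix.conjTranspose_smul, Matrix.smul_mul,
      Matrix.trace_smul, smul_eq_mul, _root_.map_mul, starRingEnd_apply, star_star]
  -- matrix elements of the tabletop map on basis matrices
  have hT : ∀ m1 m2 n1 n2 : Fin dS,
      star (v n1) ⬝ᵥ (ptraceE (Uᴴ * (Matrix.vecMulVec (w m1) (star (w m2)) ⊗ₖ ξ') * U)) *ᵥ v n2
      = ∑ j, ∑ k, (p' j : ℂ) *
          (starRingEnd ℂ) (transAmp U w e' v e m1 j n1 k) * transAmp U w e' v e m2 j n2 k := by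
    intro m1 m2 n1 n2
    rw [hξ'dec]
    exact elemL U p' e' e heC (v n1) (v n2) (w m1) (w m2)
  -- matrix elements of the forward channel on basis matrices
  have hNN : ∀ m1 m2 n1 n2 : Fin dS,
      star (w m1) ⬝ᵥ (ptraceE (U * (Matrix.vecMulVec (v n1) (star (v n2)) ⊗ₖ ξ) * Uᴴ)) *ᵥ w m2
      = ∑ k, ∑ j, (p k : ℂ) * transAmp U w e' v e m1 j n1 k *
          (starRingEnd ℂ) (transAmp U w e' v e m2 j n2 k) := by
    intro m1 m2 n1 n2
    rw [hξdec]
    have h := elemL Uᴴ p e e' he'C (w m1) (w m2) (v n1) (v n2)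
    rw [Matrix.conjTranspose_conjTranspose] at h
    rw [h]
    refine Finset.sum_congr rfl fun t _ => Finset.sum_congr rfl fun u_ _ => ?_
    rw [amp_conjTranspose, amp_conjTranspose, Complex.conj_conj, hampU, hampU]
  -- matrix elements of Nadj on basis matrices
  have hNadjW : ∀ m1 m2 n1 n2 : Fin dS,
      star (v n1) ⬝ᵥ (Nadj (Matrix.vecMulVec (w m1) (star (w m2)))) *ᵥ v n2
      = ∑ k, ∑ j, (p k : ℂ) * (starRingEnd ℂ) (transAmp U w e' v e m1 j n1 k) *
          transAmp U w e' v e m2 j n2 k := by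
    intro m1 m2 n1 n2
    have h := hadj (Matrix.vecMulVec (w m1) (star (w m2)))
      (Matrix.vecMulVec (v n1) (star (v n2)))
    rw [vmv_conjTranspose, star_star, trace_vmv_mul, trace_conjTranspose_mul_vmv] at h
    have h2 := (hNN m1 m2 n1 n2).symm.trans h
    have h3 := congrArg (starRingEnd ℂ) h2
    rw [Complex.conj_conj] at h3
    rw [← h3]
    simp only [map_sum, _root_.map_mul, Complex.conj_conj, Complex.conj_ofReal]
  -- matrix elements of the Petz map on basis matrices
  have hP : ∀ m1 m2 n1 n2 : Fin dS,
      star (v n1) ⬝ᵥ (s * Nadj (r⁻¹ * Matrix.vecMulVec (w m1) (star (w m2)) * r⁻¹) * s) *ᵥ v n2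
      = (((Real.sqrt (rγ' m1) : ℝ) : ℂ)⁻¹ * ((Real.sqrt (rγ' m2) : ℝ) : ℂ)⁻¹) *
        (((Real.sqrt (rγ n1) : ℝ) : ℂ) * ((Real.sqrt (rγ n2) : ℝ) : ℂ)) *
        ∑ k, ∑ j, (p k : ℂ) * (starRingEnd ℂ) (transAmp U w e' v e m1 j n1 k) *
          transAmp U w e' v e m2 j n2 k := by
    intro m1 m2 n1 n2
    have hmid : r⁻¹ * Matrix.vecMulVec (w m1) (star (w m2)) * r⁻¹
        = (((Real.sqrt (rγ' m1) : ℝ) : ℂ)⁻¹ * ((Real.sqrt (rγ' m2) : ℝ) : ℂ)⁻¹) •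
          Matrix.vecMulVec (w m1) (star (w m2)) := by
      rw [hrinv]; exact outer_sandwich _ w hw m1 m2
    rw [hmid, hNadj_smul, Matrix.mul_smul, Matrix.smul_mul, Matrix.smul_mulVec,
      dotProduct_smul, smul_eq_mul, hsdec, s0_sandwich _ v hv, hNadjW]
    ring
  -- difference of matrix elements, scaled
  have hdiff : ∀ m1 m2 n1 n2 : Fin dS,
      (((Real.sqrt (rγ' m1) : ℝ) : ℂ) * ((Real.sqrt (rγ' m2) : ℝ) : ℂ)) *
        ((star (v n1) ⬝ᵥ (s * Nadj (r⁻¹ * Matrix.vecMulVec (w m1) (star (w m2)) * r⁻¹) * s)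
            *ᵥ v n2)
         - (star (v n1) ⬝ᵥ (ptraceE (Uᴴ * (Matrix.vecMulVec (w m1) (star (w m2)) ⊗ₖ ξ') * U))
            *ᵥ v n2))
      = ∑ j, ∑ k,
          ((p k * Real.sqrt (rγ n1 * rγ n2) - p' j * Real.sqrt (rγ' m1 * rγ' m2) : ℝ) : ℂ) *
          (starRingEnd ℂ) (transAmp U w e' v e m1 j n1 k) * transAmp U w e' v e m2 j n2 k := by
    intro m1 m2 n1 n2
    have hswap : (∑ k, ∑ j, (p k : ℂ) * (starRingEnd ℂ) (transAmp U w e' v e m1 j n1 k) *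
          transAmp U w e' v e m2 j n2 k)
        = ∑ j, ∑ k, (p k : ℂ) * (starRingEnd ℂ) (transAmp U w e' v e m1 j n1 k) *
          transAmp U w e' v e m2 j n2 k := Finset.sum_comm
    rw [hP, hT, mul_sub, hswap]
    have hsq1 : Real.sqrt (rγ n1 * rγ n2) = Real.sqrt (rγ n1) * Real.sqrt (rγ n2) :=
      Real.sqrt_mul (hrγ n1).le _
    have hsq2 : Real.sqrt (rγ' m1 * rγ' m2) = Real.sqrt (rγ' m1) * Real.sqrt (rγ' m2) :=
      Real.sqrt_mul (hrγ' m1).le _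
    simp only [hsq1, hsq2, Complex.ofReal_sub, Complex.ofReal_mul, sub_mul,
      Finset.sum_sub_distrib, Finset.mul_sum]
    congr 1
    · exact Finset.sum_congr rfl fun j _ => Finset.sum_congr rfl fun k _ => by
        field_simp [hsqrt_ne m1, hsqrt_ne m2]
    · exact Finset.sum_congr rfl fun j _ => Finset.sum_congr rfl fun k _ => by ring
  have hsqprod_ne : ∀ m1 m2 : Fin dS,
      (((Real.sqrt (rγ' m1) : ℝ) : ℂ) * ((Real.sqrt (rγ' m2) : ℝ) : ℂ)) ≠ 0 :=
    fun m1 m2 => mul_ne_zero (hsqrt_ne m1) (hsqrt_ne m2)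
  constructor
  · intro hmap m1 m2 n1 n2
    have hd := hdiff m1 m2 n1 n2
    rw [hmap (Matrix.vecMulVec (w m1) (star (w m2))), sub_self, mul_zero] at hd
    have h0 := hd.symm
    have h1 := congrArg (starRingEnd ℂ) h0
    rw [map_zero] at h1
    refine Eq.trans ?_ h1
    simp only [map_sum, _root_.map_mul, Complex.conj_conj, Complex.conj_ofReal]
  · intro hcond X
    -- the scaled difference of elements vanishes
    have hS' : ∀ m1 m2 n1 n2 : Fin dS,
        (∑ j, ∑ k,
          ((p k * Real.sqrt (rγ n1 * rγ n2) - p' j * Real.sqrt (rγ' m1 * rγ' m2) : ℝ) : ℂ) *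
          (starRingEnd ℂ) (transAmp U w e' v e m1 j n1 k) * transAmp U w e' v e m2 j n2 k)
        = 0 := by
      intro m1 m2 n1 n2
      have h1 := congrArg (starRingEnd ℂ) (hcond m1 m2 n1 n2)
      rw [map_zero] at h1
      refine Eq.trans ?_ h1
      simp only [map_sum, _root_.map_mul, Complex.conj_conj, Complex.conj_ofReal]
    have helem : ∀ m1 m2 n1 n2 : Fin dS,
        star (v n1) ⬝ᵥ (s * Nadj (r⁻¹ * Matrix.vecMulVec (w m1) (star (w m2)) * r⁻¹) * s)
            *ᵥ v n2
        = star (v n1) ⬝ᵥ (ptraceE (Uᴴ * (Matrix.vecMulVec (w m1) (star (w m2)) ⊗ₖ ξ') * U))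
            *ᵥ v n2 := by
      intro m1 m2 n1 n2
      have hd := hdiff m1 m2 n1 n2
      rw [hS' m1 m2 n1 n2] at hd
      have h2 := (mul_eq_zero.mp hd).resolve_left (hsqprod_ne m1 m2)
      exact sub_eq_zero.mp h2
    have hbasis : ∀ m1 m2 : Fin dS,
        s * Nadj (r⁻¹ * Matrix.vecMulVec (w m1) (star (w m2)) * r⁻¹) * s
        = ptraceE (Uᴴ * (Matrix.vecMulVec (w m1) (star (w m2)) ⊗ₖ ξ') * U) := by
      intro m1 m2
      have hA := matrix_decomp v hv
        (s * Nadj (r⁻¹ * Matrix.vecMulVec (w m1) (star (w m2)) * r⁻¹) * s)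
      have hB := matrix_decomp v hv
        (ptraceE (Uᴴ * (Matrix.vecMulVec (w m1) (star (w m2)) ⊗ₖ ξ') * U))
      rw [hA, hB]
      exact Finset.sum_congr rfl fun n1 _ => Finset.sum_congr rfl fun n2 _ => by
        rw [helem m1 m2 n1 n2]
    -- linearity
    let PL : Matrix (Fin dS) (Fin dS) ℂ →ₗ[ℂ] Matrix (Fin dS) (Fin dS) ℂ :=
      { toFun := fun X => s * Nadj (r⁻¹ * X * r⁻¹) * s
        map_add' := by
          intro X Y
          rw [Matrix.mul_add, Matrix.add_mul, hNadj_add, Matrix.mul_add, Matrix.add_mul]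
        map_smul' := by
          intro cc X
          rw [RingHom.id_apply, Matrix.mul_smul, Matrix.smul_mul, hNadj_smul,
            Matrix.mul_smul, Matrix.smul_mul] }
    let TL : Matrix (Fin dS) (Fin dS) ℂ →ₗ[ℂ] Matrix (Fin dS) (Fin dS) ℂ :=
      { toFun := fun X => ptraceE (Uᴴ * (X ⊗ₖ ξ') * U)
        map_add' := by
          intro X Y
          rw [Matrix.add_kronecker, Matrix.mul_add, Matrix.add_mul, ptraceE_add]
        map_smul' := by
          intro cc X
          rw [RingHom.id_apply, Matrix.smul_kronecker, Matrix.mul_smul, Matrix.smul_mul,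
            ptraceE_smul] }
    have hdecX := matrix_decomp w hw X
    have hPL : ∀ Y, PL Y = s * Nadj (r⁻¹ * Y * r⁻¹) * s := fun _ => rfl
    have hTL : ∀ Y, TL Y = ptraceE (Uᴴ * (Y ⊗ₖ ξ') * U) := fun _ => rfl
    rw [← hPL, ← hTL]
    conv_lhs => rw [hdecX]
    conv_rhs => rw [hdecX]
    rw [map_sum, map_sum]
    refine Finset.sum_congr rfl fun m1 _ => ?_
    rw [map_sum, map_sum]
    refine Finset.sum_congr rfl fun m2 _ => ?_
    rw [_root_.map_smul PL, _root_.map_smul TL, hPL, hTL, hbasis m1 m2]
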